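/- Entanglement-witness bound on product states: Let {A_i}_{i=1}^r be matrices on ℂ^{d_A} and {B_i}_{i=1}^r matrices on ℂ^{d_B}, each family orthonormal with respect to the Hilbert–Schmidt inner product (Tr(A_iᴴ A_j) = δ_{ij} and Tr(B_iᴴ B_j) = δ_{ij}). Then for all unit vectors a ∈ ℂ^{d_A} and b ∈ ℂ^{d_B}, one has |Σ_{i=1}^r ⟨a, A_i a⟩ ⟨b, B_i b⟩| ≤ 1. -/

import Mathlib

open Matrix Kronecker ComplexOrder

/-- Trace norm `‖X‖_tr = Tr √(X Xᴴ)`. -/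
noncomputable def traceNorm {m n : Type*} [Fintype m] [Fintype n] [DecidableEq m]
    (X : Matrix m n ℂ) : ℝ :=
  (((Matrix.posSemidef_self_mul_conjTranspose X).1.eigenvectorUnitary.1 *
      diagonal (((↑) : ℝ → ℂ) ∘ (Real.sqrt ∘ (Matrix.posSemidef_self_mul_conjTranspose X).1.eigenvalues)) *
      (star (Matrix.posSemidef_self_mul_conjTranspose X).1.eigenvectorUnitary : Matrix m m ℂ)).trace).re

/-- A density matrix: positive semidefinite with trace 1. -/
def IsDensityMatrix {n : Type*} [Fintype n] (ρ : Matrix n n ℂ) : Prop :=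
  ρ.PosSemidef ∧ ρ.trace = 1

/-- The realignment map: `R(ρ)_{(i,j),(k,l)} = ρ_{(i,k),(j,l)}`. -/
def realign {dA dB : ℕ} (ρ : Matrix (Fin dA × Fin dB) (Fin dA × Fin dB) ℂ) :
    Matrix (Fin dA × Fin dA) (Fin dB × Fin dB) ℂ :=
  fun p q => ρ (p.1, q.1) (p.2, q.2)

/-- Partial transpose on the second subsystem: `(ρ^{T₂})_{(i,k),(j,l)} = ρ_{(i,l),(j,k)}`. -/
def ptranspose2 {d : ℕ} (ρ : Matrix (Fin d × Fin d) (Fin d × Fin d) ℂ) :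
    Matrix (Fin d × Fin d) (Fin d × Fin d) ℂ :=
  fun p q => ρ (p.1, q.2) (q.1, p.2)

/-- The swap (exchange) operator `F_{(i,k),(j,l)} = δ_{il} δ_{kj}`. -/
def swapOp (d : ℕ) : Matrix (Fin d × Fin d) (Fin d × Fin d) ℂ :=
  fun p q => if p.1 = q.2 ∧ p.2 = q.1 then 1 else 0

/-- The unnormalized maximally entangled projector `(|Ω⟩⟨Ω|)_{(i,k),(j,l)} = δ_{ik} δ_{jl}`. -/
def omegaProj (d : ℕ) : Matrix (Fin d × Fin d) (Fin d × Fin d) ℂ :=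
  fun p q => if p.1 = p.2 ∧ q.1 = q.2 then 1 else 0

/-- Separability: `ρ` is a finite convex combination of products of density matrices. -/
def IsSeparableState {dA dB : ℕ} (ρ : Matrix (Fin dA × Fin dB) (Fin dA × Fin dB) ℂ) : Prop :=
  ∃ (m : ℕ) (p : Fin m → ℝ) (σ : Fin m → Matrix (Fin dA) (Fin dA) ℂ)
    (τ : Fin m → Matrix (Fin dB) (Fin dB) ℂ),
    (∀ k, 0 ≤ p k) ∧ (∑ k, p k = 1) ∧ (∀ k, IsDensityMatrix (σ k)) ∧
    (∀ k, IsDensityMatrix (τ k)) ∧ ρ = ∑ k, (p k : ℂ) • (σ k ⊗ₖ τ k)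

section aux
open scoped ComplexConjugate

lemma bessel_bound' {d r : ℕ} (A : Fin r → Matrix (Fin d) (Fin d) ℂ)
    (hA : ∀ i j, ((A i)ᴴ * A j).trace = if i = j then 1 else 0)
    (a : Fin d → ℂ) (ha : ∑ i, ‖a i‖ ^ 2 = 1) :
    ∑ i, ‖star a ⬝ᵥ (A i *ᵥ a)‖ ^ 2 ≤ 1 := by
  classical
  set E := EuclideanSpace ℂ (Fin d × Fin d)
  let v : Fin r → E := fun i => WithLp.toLp 2 (fun p : Fin d × Fin d => A i p.1 p.2)
  have hv : Orthonormal ℂ v := by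
    rw [orthonormal_iff_ite]
    intro i j
    have h := hA i j
    rw [Matrix.trace] at h
    simp only [Matrix.diag, Matrix.mul_apply, Matrix.conjTranspose_apply] at h
    rw [← h, PiLp.inner_apply]
    simp only [RCLike.inner_apply, v]
    rw [Fintype.sum_prod_type, Finset.sum_comm]
    simp [RCLike.star_def]
    exact Finset.sum_congr rfl fun _ _ => Finset.sum_congr rfl fun _ _ => mul_comm _ _
  let x : E := WithLp.toLp 2 (fun p : Fin d × Fin d => a p.1 * conj (a p.2))
  have hx : ‖x‖ ^ 2 = 1 := by
    rw [EuclideanSpace.norm_eq, Real.sq_sqrt (by positivity), Fintype.sum_prod_type,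
      show (1:ℝ) = (∑ i, ‖a i‖^2) * (∑ i, ‖a i‖^2) by rw [ha]; ring,
      Finset.sum_mul_sum]
    exact Finset.sum_congr rfl fun p _ => Finset.sum_congr rfl fun q _ => by
      simp [x, norm_mul, mul_pow]
  have key : ∀ i, star a ⬝ᵥ (A i *ᵥ a) = conj (inner ℂ (v i) x : ℂ) := by
    intro i
    rw [PiLp.inner_apply]
    simp only [dotProduct, mulVec, dotProduct, Pi.star_apply,
      RCLike.inner_apply, map_sum, _root_.map_mul, RCLike.conj_conj, Finset.mul_sum, v, x]
    rw [Fintype.sum_prod_type]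
    refine Finset.sum_congr rfl fun p _ => Finset.sum_congr rfl fun q _ => ?_
    simp [RCLike.star_def]
    ring
  calc ∑ i, ‖star a ⬝ᵥ (A i *ᵥ a)‖ ^ 2
      = ∑ i, ‖(inner ℂ (v i) x : ℂ)‖ ^ 2 := by
        refine Finset.sum_congr rfl fun i _ => ?_
        rw [key i, RCLike.norm_conj]
    _ ≤ ‖x‖ ^ 2 := hv.sum_inner_products_le x
    _ = 1 := hx

end aux

/-- **Entanglement-witness bound on product states.** For orthonormal families `{A_i}`,
`{B_i}` and unit vectors `a`, `b`, one has `|Σ_i ⟨a, A_i a⟩ ⟨b, B_i b⟩| ≤ 1`. -/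
theorem witness_bound_on_product_states {dA dB r : ℕ}
    (A : Fin r → Matrix (Fin dA) (Fin dA) ℂ)
    (B : Fin r → Matrix (Fin dB) (Fin dB) ℂ)
    (hA : ∀ i j, ((A i)ᴴ * A j).trace = if i = j then 1 else 0)
    (hB : ∀ i j, ((B i)ᴴ * B j).trace = if i = j then 1 else 0)
    (a : Fin dA → ℂ) (b : Fin dB → ℂ)
    (ha : ∑ i, ‖a i‖ ^ 2 = 1) (hb : ∑ i, ‖b i‖ ^ 2 = 1) :
    ‖∑ i, (star a ⬝ᵥ (A i *ᵥ a)) * (star b ⬝ᵥ (B i *ᵥ b))‖ ≤ 1 := by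
  have hca := bessel_bound' A hA a ha
  have hcb := bessel_bound' B hB b hb
  have h1 : ‖∑ i, (star a ⬝ᵥ (A i *ᵥ a)) * (star b ⬝ᵥ (B i *ᵥ b))‖
      ≤ ∑ i, ‖(star a ⬝ᵥ (A i *ᵥ a))‖ * ‖(star b ⬝ᵥ (B i *ᵥ b))‖ := by
    refine (norm_sum_le _ _).trans ?_
    simp [norm_mul]
  have h2 := Finset.sum_mul_sq_le_sq_mul_sq Finset.univ
    (fun i => ‖(star a ⬝ᵥ (A i *ᵥ a))‖) (fun i => ‖(star b ⬝ᵥ (B i *ᵥ b))‖)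
  have h3 : (0:ℝ) ≤ ∑ i, ‖(star a ⬝ᵥ (A i *ᵥ a))‖ * ‖(star b ⬝ᵥ (B i *ᵥ b))‖ := by
    positivity
  nlinarith [sq_nonneg (∑ i, ‖(star a ⬝ᵥ (A i *ᵥ a))‖ * ‖(star b ⬝ᵥ (B i *ᵥ b))‖),
    Finset.sum_nonneg (fun i (_ : i ∈ Finset.univ) => sq_nonneg ‖(star a ⬝ᵥ (A i *ᵥ a))‖)]
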